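/- The poset 𝔹 of sequences of binary strings under the restriction order 𝕃 has infinitely many infinite rays: for every nonempty binary string b and each ε ∈ {0,1}, there is a unique saturated chain in 𝔹 from b up to εb, so the number of infinite ascending rays from the root is infinite. In contrast, the Macdonald tree has exactly two infinite rays; hence the graph of one-dimensional representations of the 2-Sylow subgroups of symmetric groups is not isomorphic to the Macdonald tree. -/

import Mathlib

/-- The restriction operation on a single binary string: repeatedly remove the leading
bit, `𝕃(b) = (b̄, 𝕃(b̄))`, with `𝕃` of a length-one string being empty. -/
def Lstr : List Bool → List (List Bool)
  | [] => []
  | [_] => []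
  | _ :: b :: t => (b :: t) :: Lstr (b :: t)

/-- The restriction operation `𝕃` on a sequence of binary strings: it acts on the last
string of the sequence. -/
def LL (s : List (List Bool)) : List (List Bool) :=
  s.dropLast ++ Lstr (s.getLastD [])

/-- A sequence of binary strings is valid when the lengths of its strings are strictly
decreasing (so it encodes a sequence of strings of some size `n`). -/
def ValidSeq (s : List (List Bool)) : Prop :=
  List.Chain' (· > ·) (s.map List.length)




def mu (s : List (List Bool)) : ℕ := (s.map (fun t => 2 ^ t.length)).sum

lemma mu_append (a b : List (List Bool)) : mu (a ++ b) = mu a + mu b := by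
  simp [mu]

lemma mu_Lstr (t : List Bool) : mu (Lstr t) < 2 ^ t.length := by
  induction t with
  | nil => simp [Lstr, mu]
  | cons a u ih =>
    cases u with
    | nil => simp [Lstr, mu]
    | cons h tl =>
      rw [Lstr]
      have : mu ((h :: tl) :: Lstr (h :: tl)) = 2 ^ (h :: tl).length + mu (Lstr (h :: tl)) := by
        simp [mu]
      rw [this]
      have h2 : (a :: h :: tl).length = (h :: tl).length + 1 := rfl
      rw [h2, pow_succ]
      omega

lemma mu_LL {s : List (List Bool)} (h : s ≠ []) : mu (LL s) < mu s := by
  have hs : s.dropLast ++ [s.getLast h] = s := List.dropLast_append_getLast h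
  have hd : s.getLastD [] = s.getLast h := by
    rw [List.getLastD_eq_getLast?, List.getLast?_eq_getLast h]; rfl
  rw [LL, hd, mu_append]
  conv_rhs => rw [← hs, mu_append]
  have := mu_Lstr (s.getLast h)
  have : mu [s.getLast h] = 2 ^ (s.getLast h).length := by simp [mu]
  have := mu_Lstr (s.getLast h)
  simp [mu] at *
  omega



lemma LL_nil : LL [] = [] := rfl

lemma iter_nil (d : ℕ) : LL^[d] [] = [] := Function.iterate_fixed LL_nil d

lemma iter_ne_nil {x : List (List Bool)} {i j : ℕ} (hij : i ≤ j) (h : LL^[j] x ≠ []) :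
    LL^[i] x ≠ [] := by
  intro hi
  apply h
  have : LL^[j] x = LL^[j - i] (LL^[i] x) := by
    rw [← Function.iterate_add_apply]; congr 1; omega
  rw [this, hi, iter_nil]


lemma mu_iter {x : List (List Bool)} {i j : ℕ} (hij : i < j) (h : LL^[j] x ≠ []) :
    mu (LL^[j] x) < mu (LL^[i] x) := by
  induction j with
  | zero => omega
  | succ k ih =>
    have hk : LL^[k] x ≠ [] := by
      intro hnil
      exact h (by rw [Function.iterate_succ_apply', hnil, LL_nil])
    have hstep : mu (LL^[k+1] x) < mu (LL^[k] x) := by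
      rw [Function.iterate_succ_apply']
      exact mu_LL hk
    rcases Nat.lt_or_ge i k with hik | hik
    · exact lt_trans hstep (ih hik hk)
    · have : i = k := by omega
      rw [this]; exact hstep

def iterChain (x : List (List Bool)) (n : ℕ) : List (List (List Bool)) :=
  (List.range n).map (fun i => LL^[i] x)

lemma iterChain_succ (x : List (List Bool)) (n : ℕ) :
    iterChain x (n + 1) = x :: iterChain (LL x) n := by
  rw [iterChain, List.range_succ_eq_map, List.map_cons, List.map_map]
  simp only [Function.iterate_zero, id_eq, iterChain]
  exact congrArg (x :: ·)
    (List.map_congr_left (fun i _ => Function.iterate_succ_apply LL i x))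

lemma chain'_iterChain (x : List (List Bool)) (n : ℕ) :
    List.Chain' (fun a c => LL a = c) (iterChain x n) := by
  induction n generalizing x with
  | zero => simp [iterChain, List.Chain']
  | succ m ih =>
    rw [iterChain_succ]
    cases m with
    | zero => simp [iterChain, List.Chain']
    | succ k =>
      rw [iterChain_succ]
      exact List.isChain_cons_cons.mpr ⟨rfl, by rw [← iterChain_succ]; exact ih (LL x)⟩

lemma head?_iterChain (x : List (List Bool)) (n : ℕ) :
    (iterChain x (n + 1)).head? = some x := by
  rw [iterChain_succ]; rfl

lemma getLast?_iterChain (x : List (List Bool)) (n : ℕ) :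
    (iterChain x (n + 1)).getLast? = some (LL^[n] x) := by
  induction n generalizing x with
  | zero => simp [iterChain]
  | succ k ih =>
    rw [iterChain_succ, iterChain_succ, List.getLast?_cons_cons, ← iterChain_succ,
      ih (LL x), Function.iterate_succ_apply]

lemma chain_eq_iterChain (c : List (List (List Bool)))
    (h : List.Chain' (fun a b => LL a = b) c) : c = iterChain c.headI c.length := by
  induction c with
  | nil => simp [iterChain]
  | cons a c' ih =>
    cases c' with
    | nil => simp [iterChain, List.range_succ]
    | cons a' t =>
      rw [List.Chain', List.isChain_cons_cons] at h
      obtain ⟨h1, h2⟩ := h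
      have := ih h2
      simp only [List.headI] at this ⊢
      rw [List.length_cons, iterChain_succ, h1, ← this]



lemma LL_concat (s : List (List Bool)) (t : List Bool) :
    LL (s ++ [t]) = s ++ Lstr t := by
  rw [LL, List.dropLast_concat, List.getLastD_concat]

lemma reach (t : List Bool) (ht : t ≠ []) :
    (∀ s, ∃ m, LL^[m] (s ++ Lstr t) = s) ∧ (∀ s, ∃ m, LL^[m] (s ++ [t]) = s) := by
  induction t with
  | nil => exact absurd rfl ht
  | cons a u ih =>
    cases u with
    | nil =>
      constructor
      · intro s; exact ⟨0, by simp [Lstr]⟩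
      · intro s; exact ⟨1, by simp [Function.iterate_one, LL_concat, Lstr]⟩
    | cons h tl =>
      have ihu := ih (List.cons_ne_nil h tl)
      have hC : ∀ s, ∃ m, LL^[m] (s ++ Lstr (a :: h :: tl)) = s := by
        intro s
        obtain ⟨m1, hm1⟩ := ihu.1 (s ++ [h :: tl])
        obtain ⟨m2, hm2⟩ := ihu.2 s
        refine ⟨m2 + m1, ?_⟩
        have : s ++ Lstr (a :: h :: tl) = (s ++ [h :: tl]) ++ Lstr (h :: tl) := by
          rw [Lstr]; simp
        rw [this, Function.iterate_add_apply, hm1, hm2]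
      refine ⟨hC, ?_⟩
      intro s
      obtain ⟨m, hm⟩ := hC s
      refine ⟨m + 1, ?_⟩
      rw [Function.iterate_add_apply, Function.iterate_one, LL_concat, hm]




def bstr (σ : ℕ → Bool) (k : ℕ) : List Bool := ((List.range k).reverse).map σ

lemma bstr_succ (σ : ℕ → Bool) (k : ℕ) : bstr σ (k + 1) = σ k :: bstr σ k := by
  simp [bstr, List.range_succ]

lemma bstr_length (σ : ℕ → Bool) (k : ℕ) : (bstr σ k).length = k := by simp [bstr]

def LstrE : ℕ → List ℕ
  | 0 => []
  | 1 => []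
  | (k + 2) => (k + 1) :: LstrE (k + 1)

lemma Lstr_bstr (σ : ℕ → Bool) : ∀ k, Lstr (bstr σ k) = (LstrE k).map (bstr σ) := by
  intro k
  induction k with
  | zero => simp [bstr, Lstr, LstrE]
  | succ n ih =>
    cases n with
    | zero => simp [bstr, Lstr, LstrE, List.range_succ]
    | succ j =>
      rw [bstr_succ, bstr_succ]
      rw [show Lstr (σ (j+1) :: σ j :: bstr σ j) =
        (σ j :: bstr σ j) :: Lstr (σ j :: bstr σ j) from rfl]
      rw [← bstr_succ, ih, LstrE]
      simp

lemma LstrE_succ_eq : ∀ g, 1 ≤ g → LstrE (g + 1) = (LstrE g).map (· + 1) ++ [1] := by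
  intro g hg
  induction g with
  | zero => omega
  | succ j ih =>
    cases j with
    | zero => simp [LstrE]
    | succ i =>
      have h1 := ih (by omega)
      calc LstrE (i + 1 + 1 + 1) = (i + 1 + 1) :: LstrE (i + 1 + 1) := rfl
        _ = (i + 1 + 1) :: ((LstrE (i + 1)).map (· + 1) ++ [1]) := by rw [h1]
        _ = ((i + 1) :: LstrE (i + 1)).map (· + 1) ++ [1] := by simp
        _ = (LstrE (i + 1 + 1)).map (· + 1) ++ [1] := rfl

def E : ℕ → List ℕ
  | 0 => []
  | (n + 1) =>
    if (n + 1) % 2 = 0 then (E ((n + 1) / 2)).map (· + 1)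
    else (E ((n + 1) / 2)).map (· + 1) ++ [1]
decreasing_by all_goals exact Nat.div_lt_self (by omega) (by omega)

lemma E_two_mul (n : ℕ) : E (2 * n) = (E n).map (· + 1) := by
  cases n with
  | zero => simp [E]
  | succ m =>
    rw [show 2 * (m + 1) = (2 * m + 1) + 1 by ring, E]
    simp [Nat.mul_div_cancel_left, show (2 * m + 1 + 1) % 2 = 0 by omega,
      show (2 * m + 1 + 1) / 2 = m + 1 by omega]

lemma E_two_mul_add_one (n : ℕ) : E (2 * n + 1) = (E n).map (· + 1) ++ [1] := by
  rw [show 2 * n + 1 = (2 * n) + 1 from rfl, E]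
  simp [show (2 * n + 1) % 2 = 1 by omega, show (2 * n + 1) / 2 = n by omega]

lemma E_facts : ∀ n : ℕ, (∀ x ∈ E n, 1 ≤ x) ∧ List.Chain' (· > ·) (E n) ∧
    (n ≠ 0 → E n ≠ []) := by
  intro n
  induction n using Nat.strong_induction_on with
  | _ n ih =>
    match n with
    | 0 => simp [E, List.Chain']
    | (n + 1) =>
      rcases Nat.even_or_odd (n + 1) with ⟨m, hm⟩ | ⟨m, hm⟩
      · have hm' : n + 1 = 2 * m := by omega
        have hmlt : m < n + 1 := by omega
        have hm0 : m ≠ 0 := by omega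
        obtain ⟨h1, h2, h3⟩ := ih m hmlt
        rw [hm', E_two_mul]
        refine ⟨?_, ?_, ?_⟩
        · intro x hx
          obtain ⟨y, hy, rfl⟩ := List.mem_map.mp hx
          omega
        · exact List.isChain_map_of_isChain _ (fun a b h => by omega) h2
        · intro _
          simp [h3 hm0]
      · have hmlt : m < n + 1 := by omega
        obtain ⟨h1, h2, h3⟩ := ih m hmlt
        rw [show n + 1 = 2 * m + 1 by omega, E_two_mul_add_one]
        refine ⟨?_, ?_, ?_⟩
        · intro x hx
          rcases List.mem_append.mp hx with hx | hx
          · obtain ⟨y, hy, rfl⟩ := List.mem_map.mp hx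
            omega
          · simp at hx; omega
        · apply List.isChain_append.mpr
          refine ⟨List.isChain_map_of_isChain _ (fun a b h => by omega) h2,
            List.isChain_singleton 1, ?_⟩
          intro x hx y hy
          simp at hy
          subst hy
          obtain ⟨z, hz, rfl⟩ := List.mem_map.mp (List.mem_of_mem_getLast? hx)
          have := h1 z hz
          omega
        · simp

def LLE (l : List ℕ) : List ℕ := l.dropLast ++ LstrE (l.getLastD 0)

lemma LLE_E : ∀ n, LLE (E (n + 1)) = E n := by
  intro n
  induction n using Nat.strong_induction_on with
  | _ n ih =>
    rcases Nat.even_or_odd n with ⟨m, hm⟩ | ⟨m, hm⟩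
    · rw [show n = 2 * m by omega, E_two_mul_add_one, LLE,
        List.dropLast_concat, List.getLastD_concat, E_two_mul]
      simp [LstrE]
    · have hm' : n = 2 * m + 1 := by omega
      have hl : E (m + 1) ≠ [] := (E_facts (m + 1)).2.2 (by omega)
      set l := E (m + 1) with hldef
      have hgl1 : 1 ≤ l.getLast hl := (E_facts (m + 1)).1 _ (List.getLast_mem hl)
      have hsplit : l.dropLast ++ [l.getLast hl] = l := List.dropLast_append_getLast hl
      have hgd : l.getLastD 0 = l.getLast hl := by
        rw [List.getLastD_eq_getLast?, List.getLast?_eq_getLast hl]; rfl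
      have key : LLE (l.map (· + 1)) = (LLE l).map (· + 1) ++ [1] := by
        conv_lhs => rw [← hsplit]
        rw [List.map_append, show (([l.getLast hl]).map (· + 1)) = [l.getLast hl + 1] from rfl,
          LLE, List.dropLast_concat, List.getLastD_concat, LstrE_succ_eq _ hgl1,
          LLE, hgd, List.map_append]
        simp [List.append_assoc]
      have hE : E (n + 1) = l.map (· + 1) := by
        rw [show n + 1 = 2 * (m + 1) by omega, E_two_mul]
      rw [hE, key, ih m (by omega), hm', E_two_mul_add_one]

lemma LL_concat' (s : List (List Bool)) (t : List Bool) :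
    LL (s ++ [t]) = s ++ Lstr t := by
  rw [LL, List.dropLast_concat, List.getLastD_concat]

def ray (σ : ℕ → Bool) (n : ℕ) : List (List Bool) := (E n).map (bstr σ)

lemma LL_map_bstr (σ : ℕ → Bool) (l : List ℕ) (hl : l ≠ []) :
    LL (l.map (bstr σ)) = (LLE l).map (bstr σ) := by
  have hsplit : l.dropLast ++ [l.getLast hl] = l := List.dropLast_append_getLast hl
  have hgd : l.getLastD 0 = l.getLast hl := by
    rw [List.getLastD_eq_getLast?, List.getLast?_eq_getLast hl]; rfl
  conv_lhs => rw [← hsplit]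
  rw [List.map_append, show ([l.getLast hl].map (bstr σ)) = [bstr σ (l.getLast hl)] from rfl,
    LL_concat', Lstr_bstr, LLE, hgd, List.map_append]

lemma LL_ray (σ : ℕ → Bool) (n : ℕ) : LL (ray σ (n + 1)) = ray σ n := by
  rw [ray, LL_map_bstr σ _ ((E_facts (n + 1)).2.2 (by omega)), LLE_E]
  rfl

lemma ray_zero (σ : ℕ → Bool) : ray σ 0 = [] := by simp [ray, E]

lemma ray_ne_nil (σ : ℕ → Bool) (n : ℕ) : ray σ (n + 1) ≠ [] := by
  intro h
  rw [ray, List.map_eq_nil_iff] at h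
  exact (E_facts (n + 1)).2.2 (by omega) h

lemma valid_ray (σ : ℕ → Bool) (n : ℕ) : ValidSeq (ray σ n) := by
  rw [ValidSeq, ray, List.map_map]
  have : (List.length ∘ bstr σ) = id := by
    funext k; exact bstr_length σ k
  rw [this, List.map_id]
  exact (E_facts n).2.1

lemma E_two_pow : ∀ K, E (2 ^ K) = [K + 1] := by
  intro K
  induction K with
  | zero =>
    rw [show (2 : ℕ) ^ 0 = 2 * 0 + 1 by norm_num, E_two_mul_add_one]
    simp [E]
  | succ k ih =>
    rw [show (2 : ℕ) ^ (k + 1) = 2 * 2 ^ k by ring, E_two_mul, ih]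
    rfl

lemma part2 : Set.Infinite {f : ℕ → List (List Bool) |
    f 0 = [] ∧ ∀ n, LL (f (n + 1)) = f n ∧ f (n + 1) ≠ [] ∧ ValidSeq (f (n + 1))} := by
  apply Set.infinite_of_injective_forall_mem
    (f := fun m : ℕ => ray (fun k => decide (k = m)))
  · intro m m' h
    have h2 := congrFun h (2 ^ (max m m'))
    simp only [ray, E_two_pow] at h2
    have h3 : bstr (fun k => decide (k = m)) (max m m' + 1) =
        bstr (fun k => decide (k = m')) (max m m' + 1) := by
      simpa using h2
    rw [bstr, bstr] at h3
    have h4 := (List.map_inj_left).mp h3 m (by simp)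
    simpa using h4
  · intro m
    exact ⟨ray_zero _, fun n => ⟨LL_ray _ n, ray_ne_nil _ n, valid_ray _ (n + 1)⟩⟩

lemma part1 (b : List Bool) (hb : b ≠ []) (ε : Bool) :
    ∃! c : List (List (List Bool)),
      List.Chain' (fun x y => LL x = y) c ∧
      c.head? = some [ε :: b] ∧ c.getLast? = some [b] := by
  have hx : LL [ε :: b] = [b] ++ Lstr b := by
    cases b with
    | nil => exact absurd rfl hb
    | cons h t => rfl
  obtain ⟨m, hm⟩ := (reach b hb).1 [b]
  have hk : LL^[m + 1] [ε :: b] = [b] := by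
    rw [Function.iterate_succ_apply, hx, hm]
  refine ⟨iterChain [ε :: b] (m + 1 + 1),
    ⟨chain'_iterChain _ _, head?_iterChain _ _, by rw [getLast?_iterChain, hk]⟩, ?_⟩
  rintro c' ⟨hch, hhd, hlast⟩
  cases c' with
  | nil => simp at hhd
  | cons a t =>
    have ha : a = [ε :: b] := by simpa using hhd
    subst ha
    have heq := chain_eq_iterChain _ hch
    simp only [List.headI, List.length_cons] at heq
    have hlen : LL^[t.length] [ε :: b] = [b] := by
      have h2 := getLast?_iterChain [ε :: b] t.length
      rw [← heq, hlast] at h2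
      exact (Option.some_injective _ h2.symm)
    have hne : ([b] : List (List Bool)) ≠ [] := by simp
    have hlk : t.length = m + 1 := by
      by_contra hne2
      rcases Nat.lt_or_ge t.length (m + 1) with hlt | hge
      · have h3 := mu_iter hlt (by rw [hk]; exact hne)
        rw [hk, hlen] at h3
        exact absurd h3 (lt_irrefl _)
      · have hlt : m + 1 < t.length := by omega
        have h3 := mu_iter hlt (by rw [hlen]; exact hne)
        rw [hk, hlen] at h3
        exact absurd h3 (lt_irrefl _)
    rw [heq, hlk]

lemma part3 (V : Type) (r : V → V → Prop) (root : V)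
    (hV : ∃ g₁ g₂ : ℕ → V, g₁ ≠ g₂ ∧
      {g : ℕ → V | g 0 = root ∧ ∀ n, r (g n) (g (n + 1))} = {g₁, g₂}) :
    ¬∃ e : {s : List (List Bool) // ValidSeq s} ≃ V,
      e ⟨[], (by simp [ValidSeq, List.Chain'] : ValidSeq [])⟩ = root ∧
      ∀ x y : {s : List (List Bool) // ValidSeq s},
        (LL x.1 = y.1 ∧ x.1 ≠ []) ↔ r (e y) (e x) := by
  obtain ⟨g₁, g₂, hgne, hset⟩ := hV
  rintro ⟨e, he0, herel⟩
  set S := {f : ℕ → List (List Bool) |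
    f 0 = [] ∧ ∀ n, LL (f (n + 1)) = f n ∧ f (n + 1) ≠ [] ∧ ValidSeq (f (n + 1))} with hS
  have hvalid : ∀ fp : S, ∀ n, ValidSeq (fp.1 n) := by
    rintro ⟨f, h0, h⟩ n
    cases n with
    | zero =>
      show ValidSeq (f 0)
      rw [h0]; exact (by simp [ValidSeq, List.Chain'] : ValidSeq [])
    | succ k => exact (h k).2.2
  set Φ : S → (ℕ → V) := fun fp n => e ⟨fp.1 n, hvalid fp n⟩ with hΦ
  have hΦinj : Function.Injective Φ := by
    intro f f' h
    apply Subtype.ext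
    funext n
    have h2 := congrFun h n
    simpa using congrArg Subtype.val (e.injective h2)
  have hΦmem : ∀ fp : S, Φ fp ∈ ({g₁, g₂} : Set (ℕ → V)) := by
    intro fp
    rw [← hset]
    obtain ⟨h0, h⟩ := fp.2
    refine ⟨?_, ?_⟩
    · show e ⟨fp.1 0, _⟩ = root
      rw [← he0]
      exact congrArg e (Subtype.ext h0)
    · intro n
      exact (herel ⟨fp.1 (n + 1), hvalid fp (n + 1)⟩ ⟨fp.1 n, hvalid fp n⟩).mp
        ⟨(h n).1, (h n).2.1⟩
  have hfin : Finite ↥({g₁, g₂} : Set (ℕ → V)) :=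
    ((Set.finite_singleton g₂).insert g₁).to_subtype
  have : Finite S := by
    refine Finite.of_injective (fun fp => (⟨Φ fp, hΦmem fp⟩ : ↥({g₁, g₂} : Set (ℕ → V)))) ?_
    intro a b h
    exact hΦinj (congrArg Subtype.val h)
  exact part2 (Set.finite_coe_iff.mp this)

/-- The poset `𝔹` of sequences of binary strings under the restriction order `𝕃` has
infinitely many infinite rays: for every nonempty binary string `b` and bit `ε` there is
a unique saturated chain from `εb` down to `b`, and the set of infinite ascending rays
from the root is infinite.  Consequently `𝔹` is not isomorphic (as a rooted covering
graph) to any rooted tree with exactly two infinite rays — in particular not to the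
Macdonald tree. -/
theorem one_dim_graph_not_macdonald :
    (∀ b : List Bool, b ≠ [] → ∀ ε : Bool,
      ∃! c : List (List (List Bool)),
        List.Chain' (fun x y => LL x = y) c ∧
        c.head? = some [ε :: b] ∧ c.getLast? = some [b]) ∧
    Set.Infinite {f : ℕ → List (List Bool) |
      f 0 = [] ∧ ∀ n, LL (f (n + 1)) = f n ∧ f (n + 1) ≠ [] ∧ ValidSeq (f (n + 1))} ∧
    (∀ (V : Type) (r : V → V → Prop) (root : V),
      (∃ g₁ g₂ : ℕ → V, g₁ ≠ g₂ ∧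
        {g : ℕ → V | g 0 = root ∧ ∀ n, r (g n) (g (n + 1))} = {g₁, g₂}) →
      ¬∃ e : {s : List (List Bool) // ValidSeq s} ≃ V,
        e ⟨[], by unfold ValidSeq; first | exact List.isChain_nil | exact List.chain'_nil | constructor | simp [List.Chain']⟩ = root ∧
        ∀ x y : {s : List (List Bool) // ValidSeq s},
          (LL x.1 = y.1 ∧ x.1 ≠ []) ↔ r (e y) (e x)) := by
  exact ⟨part1, part2, part3⟩
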